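/- Let n ≥ 2 and d ≥ 1. The polynomial p(x₁,…,xₙ) = (x₁+⋯+x_{n-1})·(1 + xₙ + xₙ² + ⋯ + xₙ^{d-1}) + xₙ^d has degree d, all coefficients nonnegative, exactly d(n-1)+1 nonzero monomial terms, and satisfies p(x) = 1 whenever x₁ + ⋯ + xₙ = 1. -/
import Mathlib


open MvPolynomial in
/-- The generalized Whitney polynomial
`p(x) = (x₁+⋯+x_{n-1})(1 + xₙ + ⋯ + xₙ^{d-1}) + xₙ^d` has degree `d`,
nonnegative coefficients, exactly `d(n-1)+1` nonzero terms, and equals `1`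
on the hyperplane `x₁ + ⋯ + xₙ = 1`. -/
theorem whitney_polynomial (n d : ℕ) (hn : 2 ≤ n) (hd : 1 ≤ d) :
    ∀ xn : Fin n, (xn : ℕ) = n - 1 →
    ∀ p : MvPolynomial (Fin n) ℝ,
      p = (∑ j ∈ Finset.univ.filter (fun j : Fin n => (j : ℕ) < n - 1), X j)
            * (∑ i ∈ Finset.range d, (X xn) ^ i) + (X xn) ^ d →
      p.totalDegree = d ∧
      (∀ m, 0 ≤ p.coeff m) ∧
      p.support.card = d * (n - 1) + 1 ∧
      (∀ x : Fin n → ℝ, (∑ j, x j) = 1 → MvPolynomial.eval x p = 1) := by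
  intro xn hxn p hp
  classical
  set J := Finset.univ.filter (fun j : Fin n => (j : ℕ) < n - 1) with hJ
  have hmemJ : ∀ j : Fin n, j ∈ J ↔ (j : ℕ) < n - 1 := by
    intro j; simp [hJ]
  have hjxn : ∀ j ∈ J, j ≠ xn := by
    intro j hj h
    rw [hmemJ] at hj
    rw [h, hxn] at hj
    exact lt_irrefl _ hj
  set f : Fin n × ℕ → (Fin n →₀ ℕ) :=
    fun q => Finsupp.single q.1 1 + Finsupp.single xn q.2 with hf
  set T := J ×ˢ Finset.range d with hT
  -- injectivity of f on T
  have hinj : Set.InjOn f ↑T := by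
    intro a ha b hb hab
    simp only [Finset.coe_mem, Finset.mem_coe, hT, Finset.mem_product] at ha hb
    have ha1 : a.1 ≠ xn := hjxn a.1 ha.1
    have hb1 : b.1 ≠ xn := hjxn b.1 hb.1
    have h2 : a.2 = b.2 := by
      have := DFunLike.congr_fun hab xn
      simpa [hf, Finsupp.single_apply, ha1, hb1, Ne.symm ha1, Ne.symm hb1] using this
    have h1 : a.1 = b.1 := by
      have := DFunLike.congr_fun hab a.1
      simp only [hf, Finsupp.add_apply, Finsupp.single_apply, if_pos rfl] at this
      by_contra hne
      simp [Ne.symm ha1, Ne.symm hb1, h2, Ne.symm hne] at this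
    exact Prod.ext h1 h2
  have hnotmem : Finsupp.single xn d ∉ T.image f := by
    intro h
    obtain ⟨q, hq, hfq⟩ := Finset.mem_image.mp h
    simp only [hT, Finset.mem_product] at hq
    have hq1 : q.1 ≠ xn := hjxn q.1 hq.1
    have := DFunLike.congr_fun hfq q.1
    simp [hf, Finsupp.single_apply, hq1, Ne.symm hq1] at this
  set S := insert (Finsupp.single xn d) (T.image f) with hS
  -- p as a sum of monomials
  have hpsum : p = ∑ m ∈ S, monomial m (1 : ℝ) := by
    rw [hS, Finset.sum_insert hnotmem, Finset.sum_image (fun a ha b hb => hinj (Finset.mem_coe.mpr ha) (Finset.mem_coe.mpr hb)), hp, add_comm]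
    congr 1
    · rw [X_pow_eq_monomial]
    · rw [Finset.sum_mul_sum, hT, Finset.sum_product]
      refine Finset.sum_congr rfl fun j hj => Finset.sum_congr rfl fun i hi => ?_
      rw [X_pow_eq_monomial, X, monomial_mul, one_mul]
  have hcoeff : ∀ m, p.coeff m = if m ∈ S then 1 else 0 := by
    intro m
    rw [hpsum, coeff_sum]
    simp [coeff_monomial, Finset.sum_ite_eq S m (fun _ => (1 : ℝ))]
  have hsupport : p.support = S := by
    ext m
    rw [MvPolynomial.mem_support_iff, hcoeff m]
    by_cases h : m ∈ S <;> simp [h]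
  -- cardinality of J
  have hJcard : J.card = n - 1 := by
    have : J = Finset.Iio xn := by
      ext j
      rw [hmemJ, Finset.mem_Iio, Fin.lt_def, hxn]
    rw [this, Fin.card_Iio, hxn]
  have hcard : p.support.card = d * (n - 1) + 1 := by
    rw [hsupport, hS, Finset.card_insert_of_notMem hnotmem,
      Finset.card_image_of_injOn hinj, hT, Finset.card_product, Finset.card_range,
      hJcard, Nat.mul_comm]
  refine ⟨?_, ?_, hcard, ?_⟩
  · -- total degree
    have hle : p.totalDegree ≤ d := by
      rw [hp]
      refine le_trans (totalDegree_add _ _) (max_le ?_ (le_of_eq (totalDegree_X_pow _ _)))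
      refine le_trans (totalDegree_mul _ _) ?_
      have h1 : (∑ j ∈ J, (X j : MvPolynomial (Fin n) ℝ)).totalDegree ≤ 1 := by
        refine le_trans (totalDegree_finset_sum _ _) (Finset.sup_le fun j _ => ?_)
        rw [totalDegree_X]
      have h2 : (∑ i ∈ Finset.range d, (X xn : MvPolynomial (Fin n) ℝ) ^ i).totalDegree
          ≤ d - 1 := by
        refine le_trans (totalDegree_finset_sum _ _) (Finset.sup_le fun i hi => ?_)
        refine le_trans (totalDegree_pow _ _) ?_
        rw [totalDegree_X, mul_one]
        have := Finset.mem_range.mp hi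
        omega
      omega
    have hge : d ≤ p.totalDegree := by
      have hmem : Finsupp.single xn d ∈ p.support := by
        rw [hsupport, hS]; exact Finset.mem_insert_self _ _
      have := le_totalDegree hmem
      simpa [Finsupp.sum_single_index] using this
    omega
  · -- nonnegative coefficients
    intro m
    rw [hcoeff m]
    by_cases h : m ∈ S <;> simp [h]
  · -- evaluation on the hyperplane
    intro x hx
    have hfilter : Finset.univ.filter (fun j : Fin n => ¬ (j : ℕ) < n - 1) = {xn} := by
      ext j
      simp only [Finset.mem_filter, Finset.mem_univ, true_and, Finset.mem_singleton]
      constructor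
      · intro h
        have := j.isLt
        exact Fin.ext (by omega)
      · intro h
        subst h
        omega
    have hsum : ∑ j ∈ J, x j = 1 - x xn := by
      have h := Finset.sum_filter_add_sum_filter_not Finset.univ
        (fun j : Fin n => (j : ℕ) < n - 1) x
      rw [hfilter, Finset.sum_singleton, hx] at h
      rw [hJ]
      linarith
    rw [hp]
    simp only [map_add, map_mul, map_pow, map_sum, eval_X]
    rw [hsum]
    have hg := geom_sum_mul (x xn) d
    linear_combination (-1 : ℝ) * hg
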